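/- Let f : ℝⁿ → ℝ be L-smooth, C_f ≥ sup_x ‖∇f(x)‖ over the relevant set, and 0 < γ̂ ≤ 1/(2L). Suppose vectors x̂_k, x̂_{k+1}, δ_k, e_k satisfy ((x̂_{k+1} − δ_k) − (x̂_k − e_k))ᵀ(z_k − (x̂_{k+1} − δ_k)) ≥ 0 with z_k = x̂_k − γ̂∇f(x̂_k). Then the residual G_{1/γ̂}(x̂_k) := (1/γ̂)(x̂_k − (x̂_{k+1} − δ_k)) satisfies ‖G_{1/γ̂}(x̂_k)‖² ≤ (4/γ̂)(f(x̂_k) − f(x̂_{k+1})) + Lγ̂ C_f² + (80/(Lγ̂³))(‖δ_k‖² + ‖e_k‖²). -/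

import Mathlib

local notation "⟪" x ", " y "⟫_ℝ" => @inner ℝ _ _ x y


set_option maxHeartbeats 1000000 in
lemma my_descent {n : ℕ}
    (f : EuclideanSpace ℝ (Fin n) → ℝ)
    (f' : EuclideanSpace ℝ (Fin n) → EuclideanSpace ℝ (Fin n))
    (L : ℝ) (hL : 0 ≤ L)
    (hgrad : ∀ z, HasGradientAt f (f' z) z)
    (hsmooth : ∀ u v, ‖f' u - f' v‖ ≤ L * ‖u - v‖)
    (u v : EuclideanSpace ℝ (Fin n)) :
    f v ≤ f u + ⟪f' u, v - u⟫_ℝ + L/2 * ‖v - u‖^2 := by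
  have hcont : Continuous f' := by
    have hlip : LipschitzWith (Real.toNNReal L) f' := by
      apply LipschitzWith.of_dist_le_mul
      intro x y
      simpa [dist_eq_norm, Real.coe_toNNReal L hL] using hsmooth x y
    exact hlip.continuous
  set φ : ℝ → EuclideanSpace ℝ (Fin n) := fun t => u + t • (v - u) with hφ
  have hderiv : ∀ t : ℝ, HasDerivAt (fun t => f (φ t)) ⟪f' (φ t), v - u⟫_ℝ t := by
    intro t
    have h1 : HasDerivAt φ (v - u) t := by
      simpa [hφ] using ((hasDerivAt_id t).smul_const (v - u)).const_add u
    have h2 := (hgrad (φ t)).hasFDerivAt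
    have h3 := h2.comp_hasDerivAt t h1
    exact h3
  have hc : Continuous fun t : ℝ => ⟪f' (φ t), v - u⟫_ℝ := by
    exact (hcont.comp (by fun_prop)).inner continuous_const
  have key : f (φ 1) - f (φ 0) = ∫ t in (0:ℝ)..1, ⟪f' (φ t), v - u⟫_ℝ :=
    (intervalIntegral.integral_eq_sub_of_hasDerivAt (fun t _ => hderiv t)
      (hc.intervalIntegrable 0 1)).symm
  have hφ0 : φ 0 = u := by simp [hφ]
  have hφ1 : φ 1 = v := by simp [hφ]
  have hbound : ∀ t ∈ Set.Icc (0:ℝ) 1,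
      ⟪f' (φ t), v - u⟫_ℝ ≤ ⟪f' u, v - u⟫_ℝ + L * t * ‖v - u‖^2 := by
    intro t ht
    have h4 : ⟪f' (φ t) - f' u, v - u⟫_ℝ ≤ ‖f' (φ t) - f' u‖ * ‖v - u‖ :=
      real_inner_le_norm _ _
    have h5 : ‖f' (φ t) - f' u‖ ≤ L * (t * ‖v - u‖) := by
      have := hsmooth (φ t) u
      have heq : φ t - u = t • (v - u) := by simp [hφ]
      rw [heq, norm_smul, Real.norm_eq_abs, abs_of_nonneg ht.1] at this
      exact this
    have h6 : ⟪f' (φ t), v - u⟫_ℝ = ⟪f' u, v - u⟫_ℝ + ⟪f' (φ t) - f' u, v - u⟫_ℝ := by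
      rw [inner_sub_left]; ring
    have h7 : ‖f' (φ t) - f' u‖ * ‖v - u‖ ≤ L * (t * ‖v - u‖) * ‖v - u‖ :=
      mul_le_mul_of_nonneg_right h5 (norm_nonneg _)
    rw [h6]
    nlinarith [norm_nonneg (v - u)]
  have hint : (∫ t in (0:ℝ)..1, ⟪f' (φ t), v - u⟫_ℝ)
      ≤ ∫ t in (0:ℝ)..1, (⟪f' u, v - u⟫_ℝ + L * t * ‖v - u‖^2) := by
    apply intervalIntegral.integral_mono_on (by norm_num)
      (hc.intervalIntegrable 0 1)
      ((by fun_prop : Continuous fun t : ℝ => ⟪f' u, v - u⟫_ℝ + L * t * ‖v - u‖^2).intervalIntegrable 0 1)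
    exact hbound
  have hval : (∫ t in (0:ℝ)..1, (⟪f' u, v - u⟫_ℝ + L * t * ‖v - u‖^2))
      = ⟪f' u, v - u⟫_ℝ + L/2 * ‖v - u‖^2 := by
    have hI2 : IntervalIntegrable (fun t : ℝ => L * t * ‖v - u‖^2) MeasureTheory.volume 0 1 :=
      ((by fun_prop : Continuous fun t : ℝ => L * t * ‖v - u‖^2).intervalIntegrable 0 1)
    rw [intervalIntegral.integral_add intervalIntegrable_const hI2,
      intervalIntegral.integral_const]
    have h8 : (∫ t in (0:ℝ)..1, L * t * ‖v - u‖^2)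
        = (L * ‖v - u‖^2) * ∫ t in (0:ℝ)..1, t := by
      rw [← intervalIntegral.integral_const_mul]
      congr 1; ext t; ring
    rw [h8, integral_id]
    norm_num
    ring
  rw [hφ0, hφ1] at key
  linarith [key ▸ hint, hval ▸ hint]


set_option maxHeartbeats 1000000 in
theorem stmt16 {n : ℕ}
    (f : EuclideanSpace ℝ (Fin n) → ℝ)
    (f' : EuclideanSpace ℝ (Fin n) → EuclideanSpace ℝ (Fin n))
    (L Cf γ : ℝ) (hL : 0 < L)
    (hgrad : ∀ z, HasGradientAt f (f' z) z)
    (hsmooth : ∀ u v, ‖f' u - f' v‖ ≤ L * ‖u - v‖)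
    (hγ : 0 < γ) (hγle : γ ≤ 1/(2*L))
    (xk x1 δ e : EuclideanSpace ℝ (Fin n))
    (hCf : ‖f' xk‖ ≤ Cf)
    (hproj : 0 ≤ ⟪(x1 - δ) - (xk - e), (xk - γ • f' xk) - (x1 - δ)⟫_ℝ) :
    ‖(1/γ) • (xk - (x1 - δ))‖^2
      ≤ 4/γ * (f xk - f x1) + L*γ*Cf^2 + 80/(L*γ^3) * (‖δ‖^2 + ‖e‖^2) := by
  set g := f' xk with hg
  set w := xk - (x1 - δ) with hwdef
  set a := ‖w‖ with ha
  set b := ‖δ‖ with hb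
  set c := ‖e‖ with hc
  set D := f xk - f x1 with hD
  have hCf0 : (0:ℝ) ≤ Cf := le_trans (norm_nonneg _) hCf
  have h2Lγ : γ * (2*L) ≤ 1 := by
    rw [le_div_iff₀ (by positivity)] at hγle; exact hγle
  -- rewrite the projection inequality
  have harg1 : (x1 - δ) - (xk - e) = e - w := by rw [hwdef]; abel
  have harg2 : (xk - γ • g) - (x1 - δ) = w - γ • g := by rw [hwdef]; abel
  rw [harg1, harg2] at hproj
  have hexp : ⟪e - w, w - γ • g⟫_ℝ
      = ⟪e, w⟫_ℝ - γ * ⟪e, g⟫_ℝ - a^2 + γ * ⟪w, g⟫_ℝ := by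
    rw [ha, ← real_inner_self_eq_norm_sq]
    simp only [inner_sub_left, inner_sub_right, real_inner_smul_right]
    ring
  rw [hexp] at hproj
  -- the descent lemma
  have hdesc := my_descent f f' L hL.le hgrad hsmooth xk x1
  have hx1xk : x1 - xk = δ - w := by rw [hwdef]; abel
  have hnx : ‖x1 - xk‖ ≤ b + a := by
    rw [hx1xk]; exact norm_sub_le _ _
  have hinx : ⟪g, x1 - xk⟫_ℝ = ⟪g, δ⟫_ℝ - ⟪g, w⟫_ℝ := by
    rw [hx1xk, inner_sub_right]
  have hnx2 : ‖x1 - xk‖^2 ≤ (b + a)^2 := by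
    apply sq_le_sq' _ hnx
    have : (0:ℝ) ≤ b + a := by positivity
    linarith [norm_nonneg (x1 - xk)]
  have hgδ : ⟪g, δ⟫_ℝ ≤ Cf * b := by
    calc ⟪g, δ⟫_ℝ ≤ ‖g‖ * ‖δ‖ := real_inner_le_norm _ _
      _ ≤ Cf * b := by
          apply mul_le_mul_of_nonneg_right hCf (norm_nonneg _)
  have hgw : ⟪w, g⟫_ℝ ≤ D + Cf * b + L/2 * (a + b)^2 := by
    rw [real_inner_comm]
    have : f x1 ≤ f xk + (⟪g, δ⟫_ℝ - ⟪g, w⟫_ℝ) + L/2 * (b+a)^2 := by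
      rw [← hinx]
      calc f x1 ≤ f xk + ⟪g, x1 - xk⟫_ℝ + L/2 * ‖x1 - xk‖^2 := hdesc
        _ ≤ f xk + ⟪g, x1 - xk⟫_ℝ + L/2 * (b+a)^2 := by nlinarith
    nlinarith
  have hew : ⟪e, w⟫_ℝ ≤ c * a := by
    calc ⟪e, w⟫_ℝ ≤ ‖e‖ * ‖w‖ := real_inner_le_norm _ _
      _ = c * a := rfl
  have heg : -⟪e, g⟫_ℝ ≤ c * Cf := by
    have h1 : |⟪e, g⟫_ℝ| ≤ ‖e‖ * ‖g‖ := abs_real_inner_le_norm _ _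
    have h2 : ‖e‖ * ‖g‖ ≤ c * Cf :=
      mul_le_mul_of_nonneg_left hCf (norm_nonneg _)
    have := neg_abs_le ⟪e, g⟫_ℝ
    linarith
  -- key scalar inequality
  have key : a^2 ≤ c*a + γ*(c*Cf) + γ*(D + Cf*b + L/2*(a+b)^2) := by
    have h3 : γ * ⟪w, g⟫_ℝ ≤ γ * (D + Cf*b + L/2*(a+b)^2) :=
      mul_le_mul_of_nonneg_left hgw hγ.le
    have h4 : -(γ * ⟪e, g⟫_ℝ) ≤ γ * (c*Cf) := by
      have := mul_le_mul_of_nonneg_left heg hγ.le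
      linarith
    linarith
  have key4 : L*γ*a^2 ≤ L*γ*(c*a + γ*(c*Cf) + γ*(D + Cf*b + L/2*(a+b)^2)) :=
    mul_le_mul_of_nonneg_left key (by positivity)
  have hm : (0:ℝ) ≤ L*γ := by positivity
  have hm2 : (0:ℝ) ≤ (L*γ)^2 := sq_nonneg _
  have h12 : (0:ℝ) ≤ 1 - 2*(L*γ) := by nlinarith
  have ha0 : (0:ℝ) ≤ a := norm_nonneg _
  have hb0 : (0:ℝ) ≤ b := norm_nonneg _
  have hc0 : (0:ℝ) ≤ c := norm_nonneg _
  have cleared : L*γ*a^2 ≤ 4*L*γ^2*D + L^2*γ^4*Cf^2 + 80*(b^2+c^2) := by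
    nlinarith [key4,
      mul_nonneg hm (sq_nonneg (a - 2*c)),
      mul_nonneg hm (sq_nonneg (a - 4*(L*γ)*b)),
      sq_nonneg (L*γ^2*Cf - 4*b),
      sq_nonneg (L*γ^2*Cf - 4*c),
      mul_nonneg (mul_nonneg h12 hm) (sq_nonneg a),
      mul_nonneg hm (sq_nonneg a),
      mul_nonneg (mul_nonneg h12 hm2) (sq_nonneg b),
      mul_nonneg (mul_nonneg h12 hm) (sq_nonneg b),
      mul_nonneg h12 (sq_nonneg b),
      mul_nonneg h12 (sq_nonneg c),
      mul_nonneg hm (sq_nonneg c),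
      mul_nonneg hm (sq_nonneg b)]
  have hlhs : ‖(1/γ) • w‖^2 = a^2/γ^2 := by
    rw [norm_smul, Real.norm_eq_abs, abs_of_pos (by positivity : (0:ℝ) < 1/γ)]
    field_simp
    rfl
  rw [hlhs]
  have hpos : (0:ℝ) < L*γ^3 := by positivity
  have hrw : a^2/γ^2 = (L*γ*a^2)/(L*γ^3) := by
    field_simp
  rw [hrw, div_le_iff₀ hpos]
  have heq : (4/γ*D + L*γ*Cf^2 + 80/(L*γ^3)*(b^2+c^2)) * (L*γ^3)
      = 4*L*γ^2*D + L^2*γ^4*Cf^2 + 80*(b^2+c^2) := by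
    field_simp
  rw [heq]
  exact cleared
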